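/- Let x : Fin N → EuclideanSpace ℝ (Fin d) be pairwise distinct points and f : Fin N → EuclideanSpace ℝ (Fin d). Suppose λ : Fin N → Fin N → ℝ is symmetric, nonnegative, and satisfies f i + ∑ j, (λ i j) • (x j − x i) = 0 for all i, and suppose μ : Fin N → Fin N → ℝ is symmetric, satisfies f i + ∑ j, (μ i j) • (x j − x i) = 0 for all i, and achieves equality of costs: ∑ i, ∑ j, |μ i j| * ‖x i − x j‖² = ∑ i, ∑ j, λ i j * ‖x i − x j‖². Then μ i j ≥ 0 for all i ≠ j. (Discrete analogue of: any solution of the Michell problem for such a loading is positive semidefinite.) -/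

import Mathlib

open scoped BigOperators

open Finset in
lemma self_stress_cost_zero (d N : ℕ) (x : Fin N → EuclideanSpace ℝ (Fin d))
    (σ : Fin N → Fin N → ℝ) (hsym : ∀ i j, σ i j = σ j i)
    (h : ∀ i, ∑ j, σ i j • (x j - x i) = 0) :
    ∑ i, ∑ j, σ i j * ‖x i - x j‖ ^ 2 = 0 := by
  have key : ∀ i : Fin N, ∑ j, σ i j * (inner ℝ (x j - x i) (x i) : ℝ) = 0 := by
    intro i
    have : (inner ℝ (∑ j, σ i j • (x j - x i)) (x i) : ℝ) = 0 := by rw [h i]; simp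
    rw [sum_inner] at this
    simp only [real_inner_smul_left] at this
    exact this
  have expand : ∀ i j : Fin N,
      ‖x i - x j‖ ^ 2 = -(inner ℝ (x j - x i) (x i) : ℝ) - (inner ℝ (x i - x j) (x j) : ℝ) := by
    intro i j
    rw [← real_inner_self_eq_norm_sq]
    have : (inner ℝ (x i - x j) (x i - x j) : ℝ)
        = (inner ℝ (x i - x j) (x i) : ℝ) - (inner ℝ (x i - x j) (x j) : ℝ) := by
      rw [← inner_sub_right]
    rw [this]
    have h1 : (inner ℝ (x i - x j) (x i) : ℝ) = -(inner ℝ (x j - x i) (x i) : ℝ) := by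
      rw [← inner_neg_left, neg_sub]
    rw [h1]
  calc ∑ i, ∑ j, σ i j * ‖x i - x j‖ ^ 2
      = ∑ i, ∑ j, (-(σ i j * (inner ℝ (x j - x i) (x i) : ℝ))
          - σ i j * (inner ℝ (x i - x j) (x j) : ℝ)) := by
        refine Finset.sum_congr rfl fun i _ => Finset.sum_congr rfl fun j _ => ?_
        rw [expand i j]; ring
    _ = -(∑ i, ∑ j, σ i j * (inner ℝ (x j - x i) (x i) : ℝ))
          - ∑ i, ∑ j, σ i j * (inner ℝ (x i - x j) (x j) : ℝ) := by
        rw [← Finset.sum_neg_distrib, ← Finset.sum_sub_distrib]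
        refine Finset.sum_congr rfl fun i _ => ?_
        rw [← Finset.sum_neg_distrib, ← Finset.sum_sub_distrib]
    _ = 0 := by
        have h2 : ∑ i, ∑ j, σ i j * (inner ℝ (x i - x j) (x j) : ℝ)
            = ∑ j, ∑ i, σ j i * (inner ℝ (x i - x j) (x j) : ℝ) := by
          rw [Finset.sum_comm]
          exact Finset.sum_congr rfl fun i _ => Finset.sum_congr rfl fun j _ => by
            rw [hsym i j]
        rw [h2]
        have hA : ∑ i, ∑ j, σ i j * (inner ℝ (x j - x i) (x i) : ℝ) = 0 :=
          Finset.sum_eq_zero fun i _ => key i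
        have hB : ∑ j, ∑ i, σ j i * (inner ℝ (x i - x j) (x j) : ℝ) = 0 :=
          Finset.sum_eq_zero fun j _ => key j
        rw [hA]; ring

/-- Discrete analogue of: any solution of the Michell problem for a loading
supported by an all-tension truss is itself under tension. -/
theorem michell_solution_nonneg (d N : ℕ)
    (x : Fin N → EuclideanSpace ℝ (Fin d))
    (hx : Function.Injective x)
    (f : Fin N → EuclideanSpace ℝ (Fin d))
    (lam : Fin N → Fin N → ℝ)
    (hlam_sym : ∀ i j, lam i j = lam j i)
    (hlam_nonneg : ∀ i j, 0 ≤ lam i j)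
    (hlam_eq : ∀ i, f i + ∑ j, lam i j • (x j - x i) = 0)
    (mu : Fin N → Fin N → ℝ)
    (hmu_sym : ∀ i j, mu i j = mu j i)
    (hmu_eq : ∀ i, f i + ∑ j, mu i j • (x j - x i) = 0)
    (hcost : ∑ i, ∑ j, |mu i j| * ‖x i - x j‖ ^ 2
      = ∑ i, ∑ j, lam i j * ‖x i - x j‖ ^ 2) :
    ∀ i j, i ≠ j → 0 ≤ mu i j := by
  set σ : Fin N → Fin N → ℝ := fun i j => mu i j - lam i j with hσ
  have hself : ∀ i, ∑ j, σ i j • (x j - x i) = 0 := by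
    intro i
    have := congrArg (· - (f i + ∑ j, lam i j • (x j - x i))) (hmu_eq i)
    simp only [hlam_eq i, sub_zero] at this
    calc ∑ j, σ i j • (x j - x i)
        = ∑ j, (mu i j • (x j - x i) - lam i j • (x j - x i)) := by
          refine Finset.sum_congr rfl fun j _ => ?_
          rw [hσ]; simp [sub_smul]
      _ = (∑ j, mu i j • (x j - x i)) - ∑ j, lam i j • (x j - x i) :=
          Finset.sum_sub_distrib _ _
      _ = 0 := by
          have h0 := hmu_eq i
          have h1 := hlam_eq i
          have : ∑ j, mu i j • (x j - x i) = ∑ j, lam i j • (x j - x i) := by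
            have := h0.trans h1.symm
            exact add_left_cancel this
          rw [this, sub_self]
  have hzero := self_stress_cost_zero d N x σ
    (fun i j => by rw [hσ]; simp [hmu_sym i j, hlam_sym i j]) hself
  have hmulam : ∑ i, ∑ j, mu i j * ‖x i - x j‖ ^ 2
      = ∑ i, ∑ j, lam i j * ‖x i - x j‖ ^ 2 := by
    have : ∑ i, ∑ j, σ i j * ‖x i - x j‖ ^ 2
        = (∑ i, ∑ j, mu i j * ‖x i - x j‖ ^ 2)
          - ∑ i, ∑ j, lam i j * ‖x i - x j‖ ^ 2 := by
      rw [← Finset.sum_sub_distrib]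
      refine Finset.sum_congr rfl fun i _ => ?_
      rw [← Finset.sum_sub_distrib]
      exact Finset.sum_congr rfl fun j _ => by rw [hσ]; ring
    rw [this] at hzero
    linarith
  have hdiff : ∑ i, ∑ j, (|mu i j| - mu i j) * ‖x i - x j‖ ^ 2 = 0 := by
    have : ∑ i, ∑ j, (|mu i j| - mu i j) * ‖x i - x j‖ ^ 2
        = (∑ i, ∑ j, |mu i j| * ‖x i - x j‖ ^ 2)
          - ∑ i, ∑ j, mu i j * ‖x i - x j‖ ^ 2 := by
      rw [← Finset.sum_sub_distrib]
      refine Finset.sum_congr rfl fun i _ => ?_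
      rw [← Finset.sum_sub_distrib]
      exact Finset.sum_congr rfl fun j _ => by ring
    rw [this, hcost, hmulam, sub_self]
  intro i j hij
  have hterm_nonneg : ∀ p : Fin N, ∀ q : Fin N,
      0 ≤ (|mu p q| - mu p q) * ‖x p - x q‖ ^ 2 := by
    intro p q
    exact mul_nonneg (by simp [le_abs_self]) (by positivity)
  have houter : ∀ p ∈ Finset.univ, (0:ℝ) ≤ ∑ q, (|mu p q| - mu p q) * ‖x p - x q‖ ^ 2 :=
    fun p _ => Finset.sum_nonneg fun q _ => hterm_nonneg p q
  have hrow : ∑ q, (|mu i q| - mu i q) * ‖x i - x q‖ ^ 2 = 0 :=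
    (Finset.sum_eq_zero_iff_of_nonneg houter).mp hdiff i (Finset.mem_univ i)
  have hentry : (|mu i j| - mu i j) * ‖x i - x j‖ ^ 2 = 0 :=
    (Finset.sum_eq_zero_iff_of_nonneg (fun q _ => hterm_nonneg i q)).mp hrow j
      (Finset.mem_univ j)
  have hne : x i ≠ x j := fun h => hij (hx h)
  have hpos : (0:ℝ) < ‖x i - x j‖ ^ 2 := by
    have h0 : (0:ℝ) < ‖x i - x j‖ := norm_sub_pos_iff.mpr hne
    positivity
  have : |mu i j| - mu i j = 0 := by
    rcases mul_eq_zero.mp hentry with h | h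
    · exact h
    · exact absurd h hpos.ne'
  have habs : |mu i j| = mu i j := by linarith
  exact abs_eq_self.mp habs
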